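/- Let p and q be distinct primes with p < q, and let G be a group of order p²q. If two distinct Sylow p-subgroups P₁, P₂ of G intersect nontrivially, then their intersection N = P₁ ∩ P₂ has order p and is normal in G. -/

import Mathlib

theorem inter_of_sylows_normal
    {p q : ℕ} (hp : p.Prime) (hq : q.Prime) (hpq : p < q)
    {G : Type*} [Group G] [Fintype G] (hG : Fintype.card G = p ^ 2 * q)
    (P₁ P₂ : Sylow p G) (hne : P₁ ≠ P₂)
    (hint : (P₁ : Subgroup G) ⊓ (P₂ : Subgroup G) ≠ ⊥) :
    Nat.card ((P₁ : Subgroup G) ⊓ (P₂ : Subgroup G) : Subgroup G) = p ∧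
      ((P₁ : Subgroup G) ⊓ (P₂ : Subgroup G)).Normal := by
  haveI := Fact.mk hp
  have hpq' : p ≠ q := hpq.ne
  have hcardG : Nat.card G = p ^ 2 * q := by rw [Nat.card_eq_fintype_card, hG]
  -- factorization of p^2*q at p is 2
  have hfact : (Nat.card G).factorization p = 2 := by
    rw [hcardG, Nat.factorization_mul (pow_ne_zero 2 hp.ne_zero) hq.ne_zero]
    simp [hp.factorization_pow, hq.factorization, Finsupp.single_apply, hpq'.symm]
  -- Sylow p-subgroups have cardinality p^2
  have hcard1 : Nat.card (P₁ : Subgroup G) = p ^ 2 := by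
    rw [Sylow.card_eq_multiplicity, hfact]
  have hcard2 : Nat.card (P₂ : Subgroup G) = p ^ 2 := by
    rw [Sylow.card_eq_multiplicity, hfact]
  set N : Subgroup G := (P₁ : Subgroup G) ⊓ (P₂ : Subgroup G) with hN
  -- cardinality of N is p
  have hdvd : Nat.card N ∣ p ^ 2 := hcard1 ▸ Subgroup.card_dvd_of_le inf_le_left
  obtain ⟨k, hk2, hk⟩ := (Nat.dvd_prime_pow hp).mp hdvd
  have hk0 : k ≠ 0 := by
    rintro rfl
    exact hint (Subgroup.card_eq_one.mp (by simpa using hk))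
  have hk1 : k ≠ 2 := by
    rintro rfl
    have hNP1 : N = (P₁ : Subgroup G) :=
      Subgroup.eq_of_le_of_card_ge inf_le_left (by rw [hk, hcard1])
    have : (P₁ : Subgroup G) ≤ (P₂ : Subgroup G) := hNP1 ▸ inf_le_right
    exact hne (Sylow.ext (Subgroup.eq_of_le_of_card_ge this (by rw [hcard1, hcard2])))
  have hcardN : Nat.card N = p := by
    interval_cases k
    · exact absurd rfl hk0
    · simpa using hk
    · exact absurd rfl hk1
  refine ⟨hcardN, ?_⟩
  -- both P₁ and P₂ are abelian of order p², so they normalize N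
  have comm : ∀ (P : Sylow p G), Nat.card (P : Subgroup G) = p ^ 2 →
      ∀ a b : G, a ∈ (P : Subgroup G) → b ∈ (P : Subgroup G) → a * b = b * a := by
    intro P hcard a b ha hb
    have := IsPGroup.commutative_of_card_eq_prime_sq (G := (P : Subgroup G)) hcard
      ⟨a, ha⟩ ⟨b, hb⟩
    exact Subtype.ext_iff.mp this
  have hnormalize : ∀ (P : Sylow p G), Nat.card (P : Subgroup G) = p ^ 2 →
      N ≤ (P : Subgroup G) → (P : Subgroup G) ≤ Subgroup.normalizer (N : Set G) := by
    intro P hcard hle g hg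
    rw [Subgroup.mem_normalizer_iff]
    intro h
    constructor
    · intro hh
      have : g * h * g⁻¹ = h := by
        rw [comm P hcard g h hg (hle hh)]; group
      rwa [this]
    · intro hh
      have : g⁻¹ * (g * h * g⁻¹) * g = g * h * g⁻¹ := by
        rw [comm P hcard g⁻¹ (g * h * g⁻¹) (inv_mem hg) (hle hh)]; group
      have heq : h = g * h * g⁻¹ := by
        have := this; group at this ⊢; rw [← this]
      rwa [heq]
  have h1 : (P₁ : Subgroup G) ≤ Subgroup.normalizer (N : Set G) := hnormalize P₁ hcard1 inf_le_left
  have h2 : (P₂ : Subgroup G) ≤ Subgroup.normalizer (N : Set G) := hnormalize P₂ hcard2 inf_le_right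
  -- |normalizer| is a multiple of p² dividing p²q, and is not p², hence equals p²q
  have hd1 : p ^ 2 ∣ Nat.card (Subgroup.normalizer (N : Set G)) := hcard1 ▸ Subgroup.card_dvd_of_le h1
  have hd2 : Nat.card (Subgroup.normalizer (N : Set G)) ∣ p ^ 2 * q := by
    rw [← hcardG]
    have h := Subgroup.card_dvd_of_le (le_top : Subgroup.normalizer (N : Set G) ≤ ⊤)
    rwa [Subgroup.card_top] at h
  obtain ⟨m, hm⟩ := hd1
  have hmq : m ∣ q := by
    have hp2 : p ^ 2 ≠ 0 := pow_ne_zero 2 hp.ne_zero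
    exact (Nat.mul_dvd_mul_iff_left (Nat.pos_of_ne_zero hp2)).mp (hm ▸ hd2)
  rcases (Nat.dvd_prime hq).mp hmq with rfl | rfl
  · -- normalizer has order p², so equals both P₁ and P₂, contradiction
    exfalso
    have e1 : (P₁ : Subgroup G) = Subgroup.normalizer (N : Set G) :=
      Subgroup.eq_of_le_of_card_ge h1 (by rw [hm, hcard1]; simp)
    have e2 : (P₂ : Subgroup G) = Subgroup.normalizer (N : Set G) :=
      Subgroup.eq_of_le_of_card_ge h2 (by rw [hm, hcard2]; simp)
    exact hne (Sylow.ext (e1.trans e2.symm))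
  · -- normalizer is the whole group
    have : Subgroup.normalizer (N : Set G) = ⊤ :=
      Subgroup.eq_top_of_card_eq _ (by rw [hm, hcardG])
    exact Subgroup.normalizer_eq_top_iff.mp this
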